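/- Let n ≥ 2 and let u, v, w be integers with 0 ≤ u, v ≤ n−1, u+v = 2w−1, and 1 ≤ w ≤ n−1. Then ν_2(C(n−1,u)·C(n−1,v)) ≥ ν_2(2w) − (n−w) and ν_2(C(n−1,u)·C(n−1,v)) ≥ ν_2(2n−2w) − w. -/

import Mathlib

open Finset

private lemma carry_aux (P u m : ℕ) (hP : 0 < P) (hum : u ≤ m) (h : m % P < u % P) :
    P ≤ u % P + (m - u) % P := by
  have h1 : (u % P + (m - u) % P) % P = m % P := by
    rw [← Nat.add_mod, Nat.add_sub_cancel' hum]
  rcases lt_or_ge (u % P + (m - u) % P) P with h5 | h5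
  · rw [Nat.mod_eq_of_lt h5] at h1; omega
  · exact h5

private lemma cardB_aux (m : ℕ) :
    ∀ k, ((Finset.Ico 1 (k+1)).filter fun i => 2^(i-1) ≤ m % 2^i).card ≤ m % 2^k := by
  intro k
  induction k with
  | zero => simp
  | succ k ih =>
    have hins : Finset.Ico 1 (k+1+1) = insert (k+1) (Finset.Ico 1 (k+1)) := by
      ext x; simp only [Finset.mem_Ico, Finset.mem_insert]; omega
    have hmod : m % 2^k = (m % 2^(k+1)) % 2^k :=
      (Nat.mod_mod_of_dvd m (pow_dvd_pow 2 (by omega))).symm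
    have h1 : m % 2^(k+1) < 2^(k+1) := Nat.mod_lt _ (by positivity)
    have hrk : (m % 2^(k+1)) % 2^k < 2^k := Nat.mod_lt _ (by positivity)
    have hpk : 2^(k+1) = 2 * 2^k := by rw [pow_succ]; ring
    have h2 : (m % 2^(k+1)) % 2^k = m % 2^(k+1) ∨
        (m % 2^(k+1)) % 2^k + 2^k = m % 2^(k+1) := by
      rcases Nat.lt_or_ge (m % 2^(k+1)) (2^k) with h | h
      · left; exact Nat.mod_eq_of_lt h
      · right
        rw [Nat.mod_eq_sub_mod h, Nat.mod_eq_of_lt (by omega)]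
        omega
    rw [hins, Finset.filter_insert]
    split_ifs with hcond
    · rw [Finset.card_insert_of_notMem (by simp)]
      simp only [Nat.add_sub_cancel] at hcond
      omega
    · simp only [Nat.add_sub_cancel] at hcond
      have := ih
      omega

private lemma key_lemma (m u v w : ℕ) (hu : u ≤ m) (hv : v ≤ m)
    (huv : u + v + 1 = 2*w) (hw1 : 1 ≤ w) (hw : w ≤ m) :
    (padicValNat 2 (m.choose u * m.choose v) : ℤ)
      ≥ (padicValNat 2 (2*w) : ℤ) - ((m : ℤ) + 1 - (w : ℤ)) := by
  haveI : Fact (Nat.Prime 2) := ⟨Nat.prime_two⟩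
  set k := padicValNat 2 (2*w) with hkdef
  have hw0 : w ≠ 0 := by omega
  have hkw : k = padicValNat 2 w + 1 := by
    rw [hkdef, padicValNat.mul two_ne_zero hw0, padicValNat.self one_lt_two]; omega
  have hwdvd : 2^(k-1) ∣ w := by
    have := pow_padicValNat_dvd (p := 2) (n := w)
    rwa [show k - 1 = padicValNat 2 w by omega]
  have hdvd : 2^k ∣ 2*w := pow_padicValNat_dvd
  have hk1 : 1 ≤ k := by omega
  have hkm : k ≤ m := by
    have h1 : 2^(k-1) ≤ w := Nat.le_of_dvd (by omega) hwdvd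
    have h2 : k - 1 < 2^(k-1) := Nat.lt_two_pow_self
    omega
  have hb : Nat.log 2 m < m + 1 := lt_of_le_of_lt (Nat.log_le_self 2 m) (Nat.lt_succ_self m)
  set Fu := (Finset.Ico 1 (m+1)).filter (fun i => 2^i ≤ u % 2^i + (m - u) % 2^i) with hFu
  set Fv := (Finset.Ico 1 (m+1)).filter (fun i => 2^i ≤ v % 2^i + (m - v) % 2^i) with hFv
  have hprod : padicValNat 2 (m.choose u * m.choose v) = Fu.card + Fv.card := by
    rw [padicValNat.mul (Nat.choose_pos hu).ne' (Nat.choose_pos hv).ne',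
      padicValNat_choose hu hb, padicValNat_choose hv hb]
  set G := (Finset.Ico 1 (k+1)).filter (fun i => m % 2^i < 2^(i-1)) with hG
  have hGsub : G ⊆ Fu ∪ Fv := by
    intro i hi
    rw [hG, Finset.mem_filter, Finset.mem_Ico] at hi
    obtain ⟨⟨hi1, hi2⟩, him⟩ := hi
    have hik : i ≤ k := by omega
    have hpowdvd : (2:ℕ)^i ∣ 2*w := dvd_trans (pow_dvd_pow 2 hik) hdvd
    obtain ⟨c, hc⟩ := hpowdvd
    have hPpos : 0 < (2:ℕ)^i := by positivity
    have hc1 : 1 ≤ c := by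
      rcases Nat.eq_zero_or_pos c with h | h
      · rw [h, mul_zero] at hc; omega
      · exact h
    have huvsplit : u + v = 2^i * (c-1) + (2^i - 1) := by
      have : 2*w = 2^i * c := hc
      have hc' : c - 1 + 1 = c := by omega
      have h3 : 2^i * c = 2^i * (c-1) + 2^i := by
        calc 2^i * c = 2^i * (c - 1 + 1) := by rw [hc']
          _ = 2^i * (c-1) + 2^i := by ring
      have := hPpos
      omega
    have hsumAB : u % 2^i + v % 2^i = 2^i - 1 := by
      have hA : u % 2^i < 2^i := Nat.mod_lt _ hPpos
      have hB : v % 2^i < 2^i := Nat.mod_lt _ hPpos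
      have habm : (u % 2^i + v % 2^i) % 2^i = 2^i - 1 := by
        rw [← Nat.add_mod, huvsplit, Nat.mul_add_mod, Nat.mod_eq_of_lt (by omega)]
      rcases lt_or_ge (u % 2^i + v % 2^i) (2^i) with h5 | h5
      · rw [Nat.mod_eq_of_lt h5] at habm; omega
      · rw [Nat.mod_eq_sub_mod h5, Nat.mod_eq_of_lt (by omega)] at habm
        omega
    have hpows : (2:ℕ)^i = 2 * 2^(i-1) := by
      conv_lhs => rw [show i = (i-1)+1 by omega]
      rw [pow_succ]; ring
    have hcase : 2^(i-1) ≤ u % 2^i ∨ 2^(i-1) ≤ v % 2^i := by omega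
    rw [Finset.mem_union, hFu, hFv, Finset.mem_filter, Finset.mem_filter, Finset.mem_Ico]
    rcases hcase with h | h
    · left
      exact ⟨⟨hi1, by omega⟩, carry_aux _ u m hPpos hu (by omega)⟩
    · right
      exact ⟨⟨hi1, by omega⟩, carry_aux _ v m hPpos hv (by omega)⟩
  have hGle : G.card ≤ Fu.card + Fv.card :=
    le_trans (Finset.card_le_card hGsub) (Finset.card_union_le _ _)
  have hpart : G.card
      + ((Finset.Ico 1 (k+1)).filter (fun i => ¬ (m % 2^i < 2^(i-1)))).card
      = (Finset.Ico 1 (k+1)).card :=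
    Finset.card_filter_add_card_filter_not _
  have hcard : (Finset.Ico 1 (k+1)).card = k := by
    simp
  have hBsub : ((Finset.Ico 1 (k+1)).filter (fun i => ¬ (m % 2^i < 2^(i-1))))
      ⊆ insert k ((Finset.Ico 1 ((k-1)+1)).filter (fun i => 2^(i-1) ≤ m % 2^i)) := by
    intro i hi
    rw [Finset.mem_filter, Finset.mem_Ico] at hi
    rw [Finset.mem_insert, Finset.mem_filter, Finset.mem_Ico]
    rcases Nat.eq_or_lt_of_le (show i ≤ k by omega) with h | h
    · left; exact h
    · right; exact ⟨⟨hi.1.1, by omega⟩, by omega⟩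
  have hBle : ((Finset.Ico 1 (k+1)).filter (fun i => ¬ (m % 2^i < 2^(i-1)))).card
      ≤ m % 2^(k-1) + 1 := by
    calc _ ≤ (insert k ((Finset.Ico 1 ((k-1)+1)).filter
          (fun i => 2^(i-1) ≤ m % 2^i))).card := Finset.card_le_card hBsub
      _ ≤ ((Finset.Ico 1 ((k-1)+1)).filter (fun i => 2^(i-1) ≤ m % 2^i)).card + 1 :=
          Finset.card_insert_le _ _
      _ ≤ m % 2^(k-1) + 1 := by
          have := cardB_aux m (k-1); omega
  have hmw : m % 2^(k-1) ≤ m - w := by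
    obtain ⟨c, hc⟩ := hwdvd
    have h1 : m % 2^(k-1) = ((m - w) + w) % 2^(k-1) :=
      congrArg (· % 2^(k-1)) (Nat.sub_add_cancel hw).symm
    have h2 : ((m - w) + w) % 2^(k-1) = (m - w) % 2^(k-1) := by
      rw [hc, Nat.add_mul_mod_self_left]
    rw [h1, h2]
    exact Nat.mod_le _ _
  have hfin : G.card + (m - w + 1) ≥ k := by omega
  rw [hprod]
  push_cast
  omega

theorem binom_valuation_two (n : ℕ) (hn : 2 ≤ n)
    (u v w : ℕ) (hu : u ≤ n-1) (hv : v ≤ n-1) (huv : u + v = 2*w - 1)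
    (hw1 : 1 ≤ w) (hw : w ≤ n-1) :
    (padicValNat 2 ((n-1).choose u * (n-1).choose v) : ℤ)
        ≥ (padicValNat 2 (2*w) : ℤ) - ((n : ℤ) - (w : ℤ))
    ∧ (padicValNat 2 ((n-1).choose u * (n-1).choose v) : ℤ)
        ≥ (padicValNat 2 (2*n - 2*w) : ℤ) - (w : ℤ) := by
  set m := n - 1 with hm
  have hmn : (m : ℤ) + 1 = (n : ℤ) := by
    have : m + 1 = n := by omega
    exact_mod_cast congrArg (Nat.cast : ℕ → ℤ) this
  constructor
  · have := key_lemma m u v w hu hv (by omega) hw1 hw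
    omega
  · have hkey := key_lemma m (m-u) (m-v) (n-w) (Nat.sub_le _ _) (Nat.sub_le _ _)
      (by omega) (by omega) (by omega)
    rw [Nat.choose_symm hu, Nat.choose_symm hv] at hkey
    rw [show 2*n - 2*w = 2*(n-w) by omega]
    have hc : ((n - w : ℕ) : ℤ) = (n : ℤ) - (w : ℤ) := by
      have : w ≤ n := by omega
      exact_mod_cast Int.ofNat_sub this
    omega
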